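/- arXiv:1805.06992 — 4 statements merged into one kernel-verified Lean document; each statement's English description precedes it below -/
import Mathlib

section
/- Let G=(V,E) be a finite acyclic digraph, let T be a set of additional directed edges on V disjoint from E, and let H=(V, E∪T). If C=(V, E∪T') with T'⊆T is a maximal child of (G,T), then (i) T' contains every edge of T whose two endpoints lie in distinct strongly connected components of H, and (ii) for every strongly connected component S of H, the restriction (S, (E∪T') ∩ (S×S)) is a maximal child of the pair consisting of the restricted graph (S, E ∩ (S×S)) and the restricted edge set T ∩ (S×S). -/
/-- `u` reaches `v`: there is a nonempty directed path from `u` to `v` using edges in `E`. -/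
def reaches {V : Type*} (E : Set (V × V)) (u v : V) : Prop :=
  Relation.TransGen (fun a b => (a, b) ∈ E) u v

/-- A digraph (with edge set `E`) is acyclic if no vertex reaches itself. -/
def Acyclic {V : Type*} (E : Set (V × V)) : Prop := ∀ v, ¬ reaches E v v

/-- A digraph contains a directed cycle if some vertex reaches itself. -/
def HasCycle {V : Type*} (E : Set (V × V)) : Prop := ∃ v, reaches E v v

/-- `(V, E ∪ T')` is a maximal child of `((V,E), T)`. -/
def IsMaxChild {V : Type*} (E T T' : Set (V × V)) : Prop :=
  T' ⊆ T ∧ Acyclic (E ∪ T') ∧ ∀ e ∈ T \ T', HasCycle (insert e (E ∪ T'))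

/-- `u` and `v` lie in the same strongly connected component of the digraph `H`. -/
def sameSCC {V : Type*} (H : Set (V × V)) (u v : V) : Prop :=
  u = v ∨ (reaches H u v ∧ reaches H v u)

/-- `S` is a strongly connected component of the digraph `H`. -/
def IsSCC {V : Type*} (H : Set (V × V)) (S : Set V) : Prop :=
  ∃ u, S = {v | sameSCC H u v}

lemma reaches_mono {V : Type*} {A B : Set (V × V)} (h : A ⊆ B) {u v : V}
    (hr : reaches A u v) : reaches B u v :=
  Relation.TransGen.mono (fun _ _ hab => h hab) _ _ hr

lemma split_lemma {V : Type*} (F : Set (V × V)) (e : V × V) {u v : V}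
    (h : reaches (insert e F) u v) :
    reaches F u v ∨ (Relation.ReflTransGen (fun a b => (a, b) ∈ F) u e.1 ∧
      Relation.ReflTransGen (fun a b => (a, b) ∈ F) e.2 v) := by
  induction h with
  | single hb =>
    rcases hb with hb | hb
    · right
      have h1 : u = e.1 := congrArg Prod.fst hb
      have h2 : _ = e.2 := congrArg Prod.snd hb
      exact ⟨h1 ▸ .refl, h2 ▸ .refl⟩
    · exact Or.inl (.single hb)
  | tail _ hbv ih =>
    rename_i b v _
    rcases hbv with hbv | hbv
    · have h1 : b = e.1 := congrArg Prod.fst hbv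
      have h2 : v = e.2 := congrArg Prod.snd hbv
      right
      rcases ih with h | ⟨hu, _⟩
      · exact ⟨h1 ▸ h.to_reflTransGen, h2 ▸ .refl⟩
      · exact ⟨hu, h2 ▸ .refl⟩
    · rcases ih with h | ⟨hu, hv⟩
      · exact Or.inl (h.tail hbv)
      · exact Or.inr ⟨hu, hv.tail hbv⟩

lemma key_lemma {V : Type*} {F : Set (V × V)} (hacyc : Acyclic F) {e : V × V}
    (hne : e.1 ≠ e.2) (hc : HasCycle (insert e F)) : reaches F e.2 e.1 := by
  obtain ⟨v, hv⟩ := hc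
  rcases split_lemma F e hv with h | ⟨h1, h2⟩
  · exact absurd h (hacyc v)
  · have h3 := h2.trans h1
    rcases Relation.reflTransGen_iff_eq_or_transGen.mp h3 with h | h
    · exact absurd h hne
    · exact h

lemma restrict_path {V : Type*} (F : Set (V × V)) (S : Set V) {a c : V}
    (hS : ∀ w, Relation.ReflTransGen (fun x y => (x, y) ∈ F) a w →
      Relation.ReflTransGen (fun x y => (x, y) ∈ F) w c → w ∈ S) :
    ∀ {b : V}, reaches F a b → Relation.ReflTransGen (fun x y => (x, y) ∈ F) b c →
      reaches (F ∩ S ×ˢ S) a b := by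
  intro b h
  induction h with
  | single hab =>
    intro hbc
    exact .single ⟨hab, hS a .refl (.head hab hbc), hS _ (.single hab) hbc⟩
  | tail h hbd ih =>
    rename_i m n
    intro hnc
    have hmc : Relation.ReflTransGen (fun x y => (x, y) ∈ F) m c := .head hbd hnc
    exact (ih hmc).tail ⟨hbd, hS m h.to_reflTransGen hmc,
      hS n (h.tail hbd).to_reflTransGen hnc⟩

lemma sameSCC_trans {V : Type*} {H : Set (V × V)} {a b c : V}
    (h1 : sameSCC H a b) (h2 : sameSCC H b c) : sameSCC H a c := by
  rcases h1 with rfl | ⟨h1, h1'⟩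
  · exact h2
  rcases h2 with rfl | ⟨h2, h2'⟩
  · exact Or.inr ⟨h1, h1'⟩
  · exact Or.inr ⟨h1.trans h2, h2'.trans h1'⟩

theorem stmt_0 {V : Type*} [Fintype V] [DecidableEq V]
    (E T T' : Set (V × V))
    (hEloop : ∀ e ∈ E, e.1 ≠ e.2) (hTloop : ∀ e ∈ T, e.1 ≠ e.2)
    (hdisj : Disjoint E T) (hacyc : Acyclic E)
    (hmax : IsMaxChild E T T') :
    (∀ e ∈ T, ¬ sameSCC (E ∪ T) e.1 e.2 → e ∈ T') ∧
    (∀ S : Set V, IsSCC (E ∪ T) S →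
      IsMaxChild (E ∩ S ×ˢ S) (T ∩ S ×ˢ S) (T' ∩ S ×ˢ S)) := by
  obtain ⟨hsub, hacyc', hm⟩ := hmax
  have hsubH : E ∪ T' ⊆ E ∪ T := Set.union_subset_union_right _ hsub
  have key' : ∀ e ∈ T \ T', reaches (E ∪ T') e.2 e.1 := fun e he =>
    key_lemma hacyc' (hTloop e he.1) (hm e he)
  constructor
  · intro e he hnot
    by_contra heT'
    exact hnot (Or.inr ⟨.single (Or.inr he), reaches_mono hsubH (key' e ⟨he, heT'⟩)⟩)
  · intro S hS
    refine ⟨Set.inter_subset_inter_left _ hsub, ?_, ?_⟩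
    · intro v hv
      refine hacyc' v (reaches_mono ?_ hv)
      intro x hx
      rcases hx with ⟨hx, _⟩ | ⟨hx, _⟩
      · exact Or.inl hx
      · exact Or.inr hx
    · intro e he
      have heT' : e ∉ T' := fun h => he.2 ⟨h, he.1.2⟩
      have hp : reaches (E ∪ T') e.2 e.1 := key' e ⟨he.1.1, heT'⟩
      obtain ⟨u, rfl⟩ := hS
      have he1S : e.1 ∈ {v | sameSCC (E ∪ T) u v} := (Set.mem_prod.mp he.1.2).1
      have hSmem : ∀ w, Relation.ReflTransGen (fun x y => (x, y) ∈ E ∪ T') e.2 w →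
          Relation.ReflTransGen (fun x y => (x, y) ∈ E ∪ T') w e.1 →
          w ∈ {v | sameSCC (E ∪ T) u v} := by
        intro w h1 h2
        refine sameSCC_trans he1S ?_
        by_cases hw : e.1 = w
        · exact Or.inl hw
        · refine Or.inr ⟨?_, ?_⟩
          · exact Relation.TransGen.head' (Or.inr he.1.1)
              (Relation.ReflTransGen.mono (fun a b hab => hsubH hab) _ _ h1)
          · rcases Relation.reflTransGen_iff_eq_or_transGen.mp
              (Relation.ReflTransGen.mono (fun a b hab => hsubH hab) _ _ h2) with h | h
            · exact absurd h hw
            · exact h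
      have hres : reaches ((E ∪ T') ∩ {v | sameSCC (E ∪ T) u v} ×ˢ
          {v | sameSCC (E ∪ T) u v}) e.2 e.1 :=
        restrict_path _ _ hSmem hp .refl
      rw [Set.union_inter_distrib_right] at hres
      refine ⟨e.1, Relation.TransGen.head ?_ (reaches_mono (Set.subset_insert _ _) hres)⟩
      exact Set.mem_insert_iff.mpr (Or.inl Prod.mk.eta)
end

section
/- Let G=(V,E) be a finite acyclic digraph, let T be a set of additional directed edges on V disjoint from E, and let H=(V, E∪T). Suppose T'⊆T satisfies: (i) T' contains every edge of T whose two endpoints lie in distinct strongly connected components of H, and (ii) for every strongly connected component S of H, the restriction (S, (E∪T') ∩ (S×S)) is a maximal child of the pair consisting of (S, E ∩ (S×S)) and T ∩ (S×S). Then C=(V, E∪T') is a maximal child of (G,T). -/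
theorem stmt_1 {V : Type*} [Fintype V] [DecidableEq V]
    (E T T' : Set (V × V))
    (hEloop : ∀ e ∈ E, e.1 ≠ e.2) (hTloop : ∀ e ∈ T, e.1 ≠ e.2)
    (hdisj : Disjoint E T) (hacyc : Acyclic E)
    (hsub : T' ⊆ T)
    (hbridge : ∀ e ∈ T, ¬ sameSCC (E ∪ T) e.1 e.2 → e ∈ T')
    (hSCC : ∀ S : Set V, IsSCC (E ∪ T) S →
      IsMaxChild (E ∩ S ×ˢ S) (T ∩ S ×ˢ S) (T' ∩ S ×ˢ S)) :
    IsMaxChild E T T' := by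
  have hsub' : E ∪ T' ⊆ E ∪ T := Set.union_subset_union_right E hsub
  have hmono : ∀ u w : V, reaches (E ∪ T') u w → reaches (E ∪ T) u w :=
    fun u w h => Relation.TransGen.mono (fun a b hab => hsub' hab) u w h
  refine ⟨hsub, ?_, ?_⟩
  · intro v hv
    set S : Set V := {w | sameSCC (E ∪ T) v w} with hSdef
    obtain ⟨_, hA, _⟩ := hSCC S ⟨v, rfl⟩
    have hvS : v ∈ S := Or.inl rfl
    have key : ∀ w, reaches (E ∪ T') v w → reaches (E ∪ T) w v →
        reaches ((E ∪ T') ∩ S ×ˢ S) v w := by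
      intro w h
      induction h with
      | single h =>
        intro hwv
        exact Relation.TransGen.single
          ⟨h, hvS, Or.inr ⟨Relation.TransGen.single (hsub' h), hwv⟩⟩
      | @tail b w hb he ih =>
        intro hwv
        have hbv : reaches (E ∪ T) b v :=
          Relation.TransGen.head (hsub' he) hwv
        have hbS : b ∈ S := Or.inr ⟨hmono v b hb, hbv⟩
        have hwS : w ∈ S :=
          Or.inr ⟨(hmono v b hb).tail (hsub' he), hwv⟩
        exact (ih hbv).tail ⟨he, hbS, hwS⟩
    have hcyc : reaches ((E ∪ T') ∩ S ×ˢ S) v v := key v hv (hmono v v hv)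
    rw [Set.union_inter_distrib_right] at hcyc
    exact hA v hcyc
  · rintro e ⟨heT, heT'⟩
    have hsame : sameSCC (E ∪ T) e.1 e.2 := by
      by_contra h
      exact heT' (hbridge e heT h)
    set S : Set V := {w | sameSCC (E ∪ T) e.1 w} with hSdef
    obtain ⟨_, _, hmax⟩ := hSCC S ⟨e.1, rfl⟩
    have heSS : e ∈ S ×ˢ S := ⟨Or.inl rfl, hsame⟩
    have : HasCycle (insert e ((E ∩ S ×ˢ S) ∪ (T' ∩ S ×ˢ S))) :=
      hmax e ⟨⟨heT, heSS⟩, fun h => heT' h.1⟩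
    obtain ⟨v, hv⟩ := this
    refine ⟨v, Relation.TransGen.mono ?_ v v hv⟩
    rintro a b (rfl | hab)
    · exact Set.mem_insert _ _
    · exact Set.mem_insert_of_mem _ (by
        rcases hab with ⟨h, _⟩ | ⟨h, _⟩
        exacts [Or.inl h, Or.inr h])
end

section
/- Let G=(V,E) be a finite acyclic digraph and let T ⊆ V×V be a finite set of additional edges disjoint from E. For every maximal child C=(V, E∪T') of (G,T), there exists a list L enumerating the edges of T without repetition such that the greedy insertion result of L (processing the edges of L in order and adding each edge if and only if the graph stays acyclic, starting from G) equals C. -/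
open Classical in
/-- Greedy insertion: process the edges of the list in order, adding each edge
if and only if the resulting graph is still acyclic. -/
noncomputable def greedy {V : Type*} (E : Set (V × V)) : List (V × V) → Set (V × V)
  | [] => E
  | e :: rest => greedy (if Acyclic (insert e E) then insert e E else E) rest

lemma acyclic_mono {V : Type*} {A B : Set (V × V)} (h : A ⊆ B) (hB : Acyclic B) :
    Acyclic A := fun v hv => hB v (Relation.TransGen.mono (fun a b hab => h hab) v v hv)

lemma greedy_append {V : Type*} (E : Set (V × V)) (L1 L2 : List (V × V)) :
    greedy E (L1 ++ L2) = greedy (greedy E L1) L2 := by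
  induction L1 generalizing E with
  | nil => simp [greedy]
  | cons e rest ih => simp [greedy, ih]

lemma greedy_accept {V : Type*} (E : Set (V × V)) (L : List (V × V))
    (h : Acyclic (E ∪ {e | e ∈ L})) : greedy E L = E ∪ {e | e ∈ L} := by
  induction L generalizing E with
  | nil => simp [greedy]
  | cons e rest ih =>
    have h1 : Acyclic (insert e E) := by
      apply acyclic_mono _ h
      intro x hx
      rcases hx with hx | hx
      · exact Or.inr (by simp [hx])
      · exact Or.inl hx
    rw [greedy, if_pos h1, ih]
    · ext x; simp [Set.mem_union, Set.mem_insert_iff]; tauto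
    · apply acyclic_mono _ h
      intro x hx
      rcases hx with hx | hx
      · rcases hx with hx | hx
        · exact Or.inr (by simp [hx])
        · exact Or.inl hx
      · exact Or.inr (by simpa using Or.inr hx)

lemma greedy_reject {V : Type*} (E : Set (V × V)) (L : List (V × V))
    (h : ∀ e ∈ L, HasCycle (insert e E)) : greedy E L = E := by
  induction L with
  | nil => simp [greedy]
  | cons e rest ih =>
    have h1 : ¬ Acyclic (insert e E) := by
      obtain ⟨v, hv⟩ := h e (by simp)
      exact fun ha => ha v hv
    rw [greedy, if_neg h1]
    exact ih (fun e' he' => h e' (by simp [he']))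

theorem stmt_9 {V : Type*} [Fintype V] [DecidableEq V]
    (E T : Set (V × V))
    (hEloop : ∀ e ∈ E, e.1 ≠ e.2) (hTloop : ∀ e ∈ T, e.1 ≠ e.2)
    (hdisj : Disjoint E T) (hacyc : Acyclic E)
    (T' : Set (V × V)) (hmax : IsMaxChild E T T') :
    ∃ L : List (V × V), L.Nodup ∧ (∀ e : V × V, e ∈ L ↔ e ∈ T) ∧
      greedy E L = E ∪ T' := by
  obtain ⟨hsub, hac, hmx⟩ := hmax
  have hfin1 : T'.Finite := Set.toFinite _
  have hfin2 : (T \ T').Finite := Set.toFinite _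
  refine ⟨hfin1.toFinset.toList ++ hfin2.toFinset.toList, ?_, ?_, ?_⟩
  · refine List.Nodup.append (Finset.nodup_toList _) (Finset.nodup_toList _) ?_
    intro x hx1 hx2
    simp [Set.Finite.mem_toFinset] at hx1 hx2
    exact hx2.2 hx1
  · intro e
    simp [List.mem_append, Set.Finite.mem_toFinset]
    constructor
    · rintro (h | h)
      · exact hsub h
      · exact h.1
    · intro h
      by_cases h' : e ∈ T'
      · exact Or.inl h'
      · exact Or.inr ⟨h, h'⟩
  · rw [greedy_append]
    have hset1 : {e | e ∈ hfin1.toFinset.toList} = T' := by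
      ext x; simp [Set.Finite.mem_toFinset]
    rw [greedy_accept E _ (by rw [hset1]; exact hac), hset1]
    apply greedy_reject
    intro e he
    simp [Set.Finite.mem_toFinset] at he
    exact hmx e he
end

section
/- (McGarvey–Debord realizability of weighted majority graphs.) Let A be a finite set of alternatives and let w : A×A → ℤ be a function satisfying w(a,b) = −w(b,a) for all a,b ∈ A, such that all the values w(a,b) for distinct a,b have the same parity. Then there exists a profile P, i.e., a finite list of strict total orders on A, such that for every pair of distinct alternatives a,b, w(a,b) = |{votes in P ranking a above b}| − |{votes in P ranking b above a}|. -/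
open Classical in
/-- The weighted majority margin of the profile `P`:
(number of votes ranking `a` above `b`) − (number of votes ranking `b` above `a`). -/
noncomputable def margin {A : Type*} (P : List (A → A → Prop)) (a b : A) : ℤ :=
  (P.countP (fun v => decide (v a b)) : ℤ) - (P.countP (fun v => decide (v b a)) : ℤ)

open Classical

namespace McG

variable {A : Type*} [Fintype A] [DecidableEq A]

lemma margin_nil (a b : A) : margin [] a b = 0 := by simp [margin]

lemma margin_cons (v : A → A → Prop) (P : List (A → A → Prop)) (a b : A) :
    margin (v :: P) a b =
      ((if v a b then 1 else 0) - (if v b a then 1 else 0)) + margin P a b := by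
  simp only [margin, List.countP_cons, decide_eq_true_eq]
  push_cast
  split_ifs <;> ring

lemma margin_append (P Q : List (A → A → Prop)) (a b : A) :
    margin (P ++ Q) a b = margin P a b + margin Q a b := by
  simp only [margin, List.countP_append]; push_cast; ring

lemma margin_join_map {β : Type*} (L : List β) (g : β → List (A → A → Prop)) (a b : A) :
    margin ((L.map g).flatten) a b = (L.map (fun p => margin (g p) a b)).sum := by
  induction L with
  | nil => simp [margin_nil]
  | cons h t ih => simp [margin_append, ih]

lemma margin_replicate_join (n : ℕ) (l : List (A → A → Prop)) (a b : A) :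
    margin ((List.replicate n l).flatten) a b = n * margin l a b := by
  induction n with
  | zero => simp [margin_nil]
  | succ m ih =>
    rw [List.replicate_succ]
    simp only [List.flatten_cons, margin_append, ih]
    push_cast; ring

/-- injection into ℕ -/
noncomputable def enc : A → ℕ := fun x => (Fintype.equivFin A x : ℕ)

lemma enc_inj : Function.Injective (enc (A := A)) := fun x y h =>
  (Fintype.equivFin A).injective (Fin.ext h)

def ord (k : A → ℤ) : A → A → Prop := fun x y => k x < k y

lemma ord_isto (k : A → ℤ) (hk : Function.Injective k) : IsStrictTotalOrder A (ord k) where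
  trichotomous := fun x y => by
    rcases lt_trichotomy (k x) (k y) with h | h | h
    · exact fun h1 _ => absurd h h1
    · exact fun _ _ => hk h
    · exact fun _ h2 => absurd h h2
  irrefl := fun x => lt_irrefl _
  trans := fun _ _ _ => lt_trans

noncomputable def k1 (a b : A) : A → ℤ :=
  fun x => if x = a then -2 else if x = b then -1 else (enc x : ℤ)

noncomputable def k2 (a b : A) : A → ℤ :=
  fun x => if x = a then 1 else if x = b then 2 else -(enc x : ℤ) - 1

lemma k1_inj {a b : A} (hab : a ≠ b) : Function.Injective (k1 a b) := by
  intro x y h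
  by_contra hxy
  simp only [k1] at h
  split_ifs at h with h1 h2 h3 h4 h5 h6 h7 <;>
    first
      | omega
      | (exact hxy (enc_inj (by exact_mod_cast h)))
      | (subst_vars; simp_all)

lemma k2_inj {a b : A} (hab : a ≠ b) : Function.Injective (k2 a b) := by
  intro x y h
  by_contra hxy
  simp only [k2] at h
  split_ifs at h with h1 h2 h3 h4 h5 h6 h7 <;>
    first
      | omega
      | (exact hxy (enc_inj (by omega)))
      | (subst_vars; simp_all)

end McG

namespace McG
variable {A : Type*} [Fintype A] [DecidableEq A]

noncomputable def pairP (a b : A) : List (A → A → Prop) := [ord (k1 a b), ord (k2 a b)]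

set_option maxHeartbeats 1000000 in
lemma margin_pairP {a b x y : A} (hab : a ≠ b) (hxy : x ≠ y) :
    margin (pairP a b) x y =
      if x = a ∧ y = b then 2 else if x = b ∧ y = a then -2 else 0 := by
  have hix := enc_inj (A := A)
  simp only [pairP, margin_cons, margin_nil, ord, k1, k2]
  by_cases h1 : x = a <;> by_cases h2 : x = b <;> by_cases h3 : y = a <;> by_cases h4 : y = b <;>
    subst_vars <;>
    simp_all <;>
    split_ifs <;>
    first
      | omega
      | (exfalso; omega)
      | (exfalso; exact hxy (hix (by omega)))

end McG

namespace McG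
variable {A : Type*} [Fintype A] [DecidableEq A]

noncomputable def cnt (w : A → A → ℤ) (p : A × A) : ℕ := ((w p.1 p.2) / 2).toNat

noncomputable def block (w : A → A → ℤ) (p : A × A) : List (A → A → Prop) :=
  (List.replicate (cnt w p) (pairP p.1 p.2)).flatten

noncomputable def P2 (w : A → A → ℤ) : List (A → A → Prop) :=
  (((Finset.univ : Finset (A × A)).toList).map (block w)).flatten

lemma even_case (w : A → A → ℤ) (hanti : ∀ a b : A, w a b = -w b a)
    (heven : ∀ a b : A, a ≠ b → w a b % 2 = 0) :
    (∀ v ∈ P2 w, IsStrictTotalOrder A v) ∧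
      ∀ a b : A, a ≠ b → w a b = margin (P2 w) a b := by
  have hdiag : ∀ a : A, w a a = 0 := fun a => by have := hanti a a; omega
  constructor
  · intro v hv
    simp only [P2, List.mem_flatten, List.mem_map] at hv
    obtain ⟨l, ⟨p, -, rfl⟩, hvl⟩ := hv
    simp only [block, List.mem_flatten, List.mem_replicate] at hvl
    obtain ⟨l', ⟨hn, rfl⟩, hvl'⟩ := hvl
    have hp : p.1 ≠ p.2 := by
      rintro h
      apply hn
      simp [cnt, ← h, hdiag]
    simp only [pairP, List.mem_cons, List.mem_singleton, List.not_mem_nil, or_false] at hvl'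
    rcases hvl' with rfl | rfl
    · exact ord_isto _ (k1_inj hp)
    · exact ord_isto _ (k2_inj hp)
  · intro a b hab
    have hsum : margin (P2 w) a b
        = ∑ p : A × A, (cnt w p : ℤ) * margin (pairP p.1 p.2) a b := by
      rw [P2, margin_join_map]
      simp only [block, margin_replicate_join]
      exact Finset.sum_map_toList _ _
    rw [hsum]
    have hterm : ∀ p : A × A,
        (cnt w p : ℤ) * margin (pairP p.1 p.2) a b =
          (if p = (a, b) then 2 * (cnt w (a, b) : ℤ) else 0)
            + (if p = (b, a) then -2 * (cnt w (b, a) : ℤ) else 0) := by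
      intro p
      by_cases h1 : p = (a, b)
      · subst h1
        rw [margin_pairP hab hab]
        simp [hab, Prod.ext_iff, Ne.symm hab]
        ring
      · by_cases h2 : p = (b, a)
        · subst h2
          rw [margin_pairP (Ne.symm hab) hab]
          have h3 : ¬(a = b ∧ b = a) := fun ⟨u, _⟩ => hab u
          rw [if_neg h3, if_pos (⟨rfl, rfl⟩ : a = a ∧ b = b), if_neg h1, if_pos rfl]
          ring
        · by_cases h3 : p.1 = p.2
          · have : cnt w p = 0 := by simp [cnt, ← h3, hdiag]
            simp [this, h1, h2]
          · rw [margin_pairP h3 hab]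
            have hne1 : ¬(a = p.1 ∧ b = p.2) := by
              intro ⟨u, v⟩; exact h1 (by simp [Prod.ext_iff, u.symm, v.symm])
            have hne2 : ¬(a = p.2 ∧ b = p.1) := by
              intro ⟨u, v⟩; exact h2 (by simp [Prod.ext_iff, u.symm, v.symm])
            rw [if_neg (by rintro ⟨rfl, rfl⟩; exact hne1 ⟨rfl, rfl⟩),
              if_neg (by rintro ⟨rfl, rfl⟩; exact hne2 ⟨rfl, rfl⟩)]
            simp [h1, h2]
    rw [Finset.sum_congr rfl (fun p _ => hterm p), Finset.sum_add_distrib,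
      Finset.sum_ite_eq' Finset.univ ((a, b) : A × A),
      Finset.sum_ite_eq' Finset.univ ((b, a) : A × A)]
    simp only [Finset.mem_univ, if_true]
    have hba := hanti b a
    have he := heven a b hab
    simp only [cnt]
    omega

end McG

namespace McG
variable {A : Type*} [Fintype A] [DecidableEq A]

noncomputable def base : A → A → Prop := ord (fun x : A => ((enc x : ℕ) : ℤ))

lemma base_isto : IsStrictTotalOrder A (base (A := A)) :=
  ord_isto _ (fun x y h => enc_inj (by exact_mod_cast h))

lemma margin_base {a b : A} (hab : a ≠ b) :
    margin [base (A := A)] a b = 1 ∨ margin [base (A := A)] a b = -1 := by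
  have hne : enc a ≠ enc b := fun h => hab (enc_inj h)
  simp only [margin_cons, margin_nil, base, ord]
  rcases lt_trichotomy (enc a) (enc b) with h | h | h
  · left; split_ifs <;> omega
  · exact absurd h hne
  · right; split_ifs <;> omega

end McG


open McG

/-- McGarvey–Debord realizability of weighted majority graphs. -/
theorem stmt_13 {A : Type*} [Fintype A] [DecidableEq A]
    (w : A → A → ℤ)
    (hanti : ∀ a b : A, w a b = -w b a)
    (hparity : ∀ a b c d : A, a ≠ b → c ≠ d → w a b % 2 = w c d % 2) :
    ∃ P : List (A → A → Prop), (∀ v ∈ P, IsStrictTotalOrder A v) ∧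
      ∀ a b : A, a ≠ b → w a b = margin P a b := by
  by_cases hE : ∀ a b : A, a ≠ b → w a b % 2 = 0
  · obtain ⟨h1, h2⟩ := even_case w hanti hE
    exact ⟨P2 w, h1, h2⟩
  · push_neg at hE
    obtain ⟨a0, b0, hab0, hodd0⟩ := hE
    set w' : A → A → ℤ := fun a b => w a b - margin [base (A := A)] a b with hw'
    have hmanti : ∀ a b : A, margin [base (A := A)] a b = -margin [base (A := A)] b a := by
      intro a b; simp only [margin]; ring
    have hanti' : ∀ a b : A, w' a b = -w' b a := by
      intro a b
      simp only [hw', hanti a b, hmanti a b]; ring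
    have heven' : ∀ a b : A, a ≠ b → w' a b % 2 = 0 := by
      intro a b hab
      have hp := hparity a b a0 b0 hab hab0
      have hm := margin_base hab
      simp only [hw']
      omega
    obtain ⟨hP1, hP2⟩ := even_case w' hanti' heven'
    refine ⟨base (A := A) :: P2 w', ?_, ?_⟩
    · intro v hv
      rcases List.mem_cons.mp hv with rfl | hv
      · exact base_isto
      · exact hP1 v hv
    · intro a b hab
      have h2 := hP2 a b hab
      have h3 : margin (base (A := A) :: P2 w') a b
          = margin [base (A := A)] a b + margin (P2 w') a b := by
        simp only [margin_cons, margin_nil]; ring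
      have h4 : w a b - margin [base (A := A)] a b = margin (P2 w') a b := h2
      rw [h3]
      omega
end
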